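/- arXiv:1105.2661 — 3 statements merged into one kernel-verified Lean document; each statement's English description precedes it below -/
import Mathlib

section
/- Let 𝒟 be a dyadic system, φ : 𝒟 → [0,∞) a set function, and suppose there is a constant C ≥ 1 such that whenever P, Q ∈ 𝒟 with P ⊆ Q and φ(P) > 0, one has φ(Q) ≤ Cφ(P), and whenever φ(P) = 0 then P has no proper dyadic subcubes (each child of P equals P). For a positive integer m and f ≥ 0 define T_m(f dσ)(x) = Σ_{k∈ℤ} φ(Q^k(x)) ∫_{Q^k(x)∖Q^{k+m}(x)} f dσ. Then for all x ∈ X and all m ≥ 1: T₁(f dσ)(x) ≤ T_m(f dσ)(x) ≤ C·m·T₁(f dσ)(x). -/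
open MeasureTheory Set
open scoped ENNReal

/-- Lemma 3.7 (atom-free part): equivalence of the dyadic model operator and
its truncated modifications T_m. -/
theorem stmt9 {X : Type*} [MeasurableSpace X] (σ : Measure X)
    (Q : ℤ → X → Set X)
    (hmem : ∀ k x, x ∈ Q k x)
    (hnested : ∀ k x, Q (k + 1) x ⊆ Q k x)
    (φ : Set X → ℝ≥0∞) (C : ℝ≥0∞) (hC : 1 ≤ C) (hCfin : C < ∞)
    (hgrowth : ∀ (x : X) (k l : ℤ), k ≤ l → 0 < φ (Q l x) →
      φ (Q k x) ≤ C * φ (Q l x))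
    (hdegenerate : ∀ (x : X) (k : ℤ), φ (Q k x) = 0 → Q (k + 1) x = Q k x)
    (f : X → ℝ≥0∞) :
    ∀ (x : X) (m : ℕ), 1 ≤ m →
      (∑' k : ℤ, φ (Q k x) * ∫⁻ y in Q k x \ Q (k + 1) x, f y ∂σ)
        ≤ (∑' k : ℤ, φ (Q k x) * ∫⁻ y in Q k x \ Q (k + (m : ℤ)) x, f y ∂σ) ∧
      (∑' k : ℤ, φ (Q k x) * ∫⁻ y in Q k x \ Q (k + (m : ℤ)) x, f y ∂σ)
        ≤ C * (m : ℝ≥0∞) *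
          (∑' k : ℤ, φ (Q k x) * ∫⁻ y in Q k x \ Q (k + 1) x, f y ∂σ) := by
  intro x m hm
  -- iterated nestedness
  have hsub : ∀ (k : ℤ) (n : ℕ), Q (k + n) x ⊆ Q k x := by
    intro k n
    induction n with
    | zero => simp
    | succ n ih =>
      have h1 : Q (k + (n : ℤ) + 1) x ⊆ Q (k + n) x := hnested (k + n) x
      intro y hy
      apply ih
      apply h1
      have : (k + ((n : ℕ) + 1 : ℕ) : ℤ) = k + (n : ℤ) + 1 := by push_cast; ring
      rwa [this] at hy
  -- covering lemma
  have hcover : ∀ (k : ℤ) (n : ℕ), Q k x \ Q (k + n) x ⊆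
      ⋃ i : Fin n, (Q (k + i) x \ Q (k + i + 1) x) := by
    intro k n
    induction n with
    | zero => simp
    | succ n ih =>
      intro y hy
      by_cases hyn : y ∈ Q (k + n) x
      · refine mem_iUnion.2 ⟨⟨n, Nat.lt_succ_self n⟩, hyn, fun hc => hy.2 ?_⟩
        have : (k + ((n : ℕ) + 1 : ℕ) : ℤ) = k + (n : ℤ) + 1 := by push_cast; ring
        rwa [this]
      · have hy' : y ∈ Q k x \ Q (k + n) x := ⟨hy.1, hyn⟩
        rcases mem_iUnion.1 (ih hy') with ⟨i, hi⟩
        exact mem_iUnion.2 ⟨⟨i, Nat.lt_succ_of_lt i.2⟩, hi⟩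
  set T₁ := ∑' k : ℤ, φ (Q k x) * ∫⁻ y in Q k x \ Q (k + 1) x, f y ∂σ with hT₁
  constructor
  · refine ENNReal.tsum_le_tsum fun k => mul_le_mul_right (lintegral_mono_set ?_) _
    refine diff_subset_diff_right ?_
    have : (k + (m : ℤ)) = (k + 1) + ((m - 1 : ℕ) : ℤ) := by
      push_cast [Nat.cast_sub hm]; ring
    rw [this]
    exact hsub (k + 1) (m - 1)
  · -- upper bound
    have key : ∀ k : ℤ,
        φ (Q k x) * ∫⁻ y in Q k x \ Q (k + (m : ℤ)) x, f y ∂σ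
          ≤ ∑ i : Fin m,
              C * (φ (Q (k + i) x) * ∫⁻ y in Q (k + i) x \ Q (k + i + 1) x, f y ∂σ) := by
      intro k
      calc φ (Q k x) * ∫⁻ y in Q k x \ Q (k + (m : ℤ)) x, f y ∂σ
          ≤ φ (Q k x) * ∫⁻ y in ⋃ i : Fin m, (Q (k + i) x \ Q (k + i + 1) x), f y ∂σ :=
            mul_le_mul_right (lintegral_mono_set (hcover k m)) _
        _ ≤ φ (Q k x) * ∑' i : Fin m, ∫⁻ y in Q (k + i) x \ Q (k + i + 1) x, f y ∂σ :=
            mul_le_mul_right (lintegral_iUnion_le _ _) _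
        _ = ∑ i : Fin m, φ (Q k x) * ∫⁻ y in Q (k + i) x \ Q (k + i + 1) x, f y ∂σ := by
            rw [tsum_fintype, Finset.mul_sum]
        _ ≤ ∑ i : Fin m,
              C * (φ (Q (k + i) x) * ∫⁻ y in Q (k + i) x \ Q (k + i + 1) x, f y ∂σ) := by
            refine Finset.sum_le_sum fun i _ => ?_
            rcases eq_or_lt_of_le (zero_le : (0 : ℝ≥0∞) ≤ φ (Q (k + i) x)) with h0 | hpos
            · have : Q (k + i + 1) x = Q (k + i) x := hdegenerate x (k + i) h0.symm
              rw [this]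
              simp
            · rw [← mul_assoc]
              exact mul_le_mul_left (hgrowth x k (k + i) (le_add_of_nonneg_right (by positivity)) hpos) _
    calc (∑' k : ℤ, φ (Q k x) * ∫⁻ y in Q k x \ Q (k + (m : ℤ)) x, f y ∂σ)
        ≤ ∑' k : ℤ, ∑ i : Fin m,
            C * (φ (Q (k + i) x) * ∫⁻ y in Q (k + i) x \ Q (k + i + 1) x, f y ∂σ) :=
          ENNReal.tsum_le_tsum key
      _ = ∑ i : Fin m, ∑' k : ℤ,
            C * (φ (Q (k + i) x) * ∫⁻ y in Q (k + i) x \ Q (k + i + 1) x, f y ∂σ) :=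
          (Summable.tsum_finsetSum fun i _ => ENNReal.summable)
      _ = ∑ i : Fin m, C * T₁ := by
          refine Finset.sum_congr rfl fun i _ => ?_
          rw [ENNReal.tsum_mul_left, hT₁]
          congr 1
          exact ((Equiv.addRight (i : ℤ)).tsum_eq
            (fun k => φ (Q k x) * ∫⁻ y in Q k x \ Q (k + 1) x, f y ∂σ))
      _ = C * (m : ℝ≥0∞) * T₁ := by
          simp [Finset.sum_const, mul_assoc, mul_comm (m : ℝ≥0∞) C, mul_left_comm]
end

section
/- Let σ be a σ-finite measure, 𝒟 a dyadic system, and ℛ ⊆ 𝒟 a collection of dyadic cubes such that: (a) no cube appears twice in ℛ, and (b) for R₁, R₂ ∈ ℛ with R₁ ⊊ R₂ one has ⟨f⟩^σ_{R₁} > 2⟨f⟩^σ_{R₂}, where ⟨f⟩^σ_R = σ(R)⁻¹∫_R |f| dσ. Then for all x ∈ X and 1 < p < ∞: Σ_{R∈ℛ} (⟨f⟩^σ_R)^p χ_R(x) ≤ 2 (M_σ f(x))^p, where M_σ f(x) = sup_{Q∈𝒟, x∈Q} ⟨f⟩^σ_Q is the dyadic maximal function. -/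
open MeasureTheory Set
open scoped ENNReal

/-- Lemma 6.9: for a sparse collection ℛ of dyadic cubes (averages at least
double along strict inclusions), the sum of p-th powers of averages is
pointwise controlled by twice the p-th power of the dyadic maximal function. -/
theorem stmt11 {X : Type*} [MeasurableSpace X] (σ : Measure X)
    (𝒟 : Set (Set X)) (ℛ : Set (Set X)) (hℛ : ℛ ⊆ 𝒟)
    (f : X → ℝ≥0∞)
    (hnested : ∀ R₁ ∈ ℛ, ∀ R₂ ∈ ℛ, R₁ ⊆ R₂ ∨ R₂ ⊆ R₁ ∨ R₁ ∩ R₂ = ∅)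
    (htop : ∀ x : X, {R | R ∈ ℛ ∧ x ∈ R}.Nonempty →
      ∃ R₀ ∈ ℛ, x ∈ R₀ ∧ ∀ R ∈ ℛ, x ∈ R → R ⊆ R₀)
    (hdouble : ∀ R₁ ∈ ℛ, ∀ R₂ ∈ ℛ, R₁ ⊂ R₂ →
      2 * ((∫⁻ y in R₂, f y ∂σ) / σ R₂) < (∫⁻ y in R₁, f y ∂σ) / σ R₁)
    (p : ℝ) (hp : 1 < p) :
    ∀ x : X,
      (∑' R : ℛ, ((∫⁻ y in (R : Set X), f y ∂σ) / σ (R : Set X)) ^ p *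
          (R : Set X).indicator (1 : X → ℝ≥0∞) x)
        ≤ 2 * (⨆ Q ∈ 𝒟, ⨆ (_ : x ∈ Q), (∫⁻ y in Q, f y ∂σ) / σ Q) ^ p := by
  intro x
  have hp0 : (0 : ℝ) < p := lt_trans one_pos hp
  set avg : Set X → ℝ≥0∞ := fun R => (∫⁻ y in R, f y ∂σ) / σ R with havg
  set M : ℝ≥0∞ := ⨆ Q ∈ 𝒟, ⨆ (_ : x ∈ Q), avg Q with hM
  have hbound : ∀ R ∈ ℛ, x ∈ R → avg R ≤ M := by
    intro R hR hx
    exact le_iSup₂_of_le R (hℛ hR) (le_iSup_of_le hx le_rfl)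
  -- trivial case M = ⊤
  rcases eq_top_or_lt_top M with hMtop | hMlt
  · rw [hMtop, ENNReal.top_rpow_of_pos hp0, ENNReal.mul_top two_ne_zero]
    exact le_top
  have hMne : M ≠ ⊤ := hMlt.ne
  set g : ℛ → ℝ≥0∞ :=
    fun R => avg (R : Set X) ^ p * (R : Set X).indicator (1 : X → ℝ≥0∞) x with hg
  have hchange : (∑' R : ℛ, avg (R : Set X) ^ p *
      (R : Set X).indicator (1 : X → ℝ≥0∞) x) = ∑' R : Function.support g, g R :=
    (tsum_subtype_eq_of_support_subset subset_rfl).symm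
  rw [hchange]
  -- properties of support elements
  have hmem : ∀ R : Function.support g, x ∈ (R : Set X) ∧ avg (R : Set X) ≠ 0 := by
    rintro ⟨R, hR⟩
    have hR' : g R ≠ 0 := hR
    constructor
    · by_contra hx
      simp [hg, Set.indicator_of_notMem hx] at hR'
    · intro h0
      simp [hg, h0, ENNReal.zero_rpow_of_pos hp0] at hR'
  -- existence of the defining index
  have hex : ∀ R : Function.support g,
      ∃ n : ℕ, M < 2 ^ (n + 1) * avg ((R : ℛ) : Set X) := by
    intro R
    rcases eq_or_ne (avg ((R : ℛ) : Set X)) ⊤ with ht | ht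
    · exact ⟨0, by rw [ht, ENNReal.mul_top (by norm_num)]; exact hMlt⟩
    obtain ⟨n, hn⟩ := ENNReal.exists_nat_gt (ENNReal.div_lt_top hMne (hmem R).2).ne
    refine ⟨n, ?_⟩
    have h1 : M < n * avg ((R : ℛ) : Set X) := by
      rw [ENNReal.div_lt_iff (Or.inl (hmem R).2) (Or.inl ht)] at hn
      exact hn
    calc M < n * avg ((R : ℛ) : Set X) := h1
      _ ≤ 2 ^ (n + 1) * avg ((R : ℛ) : Set X) := by
          gcongr
          calc (n : ℝ≥0∞) ≤ 2 ^ n := by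
                exact_mod_cast Nat.le_of_lt (Nat.lt_two_pow_self (n := n))
            _ ≤ 2 ^ (n + 1) := by gcongr <;> simp
  set ι : Function.support g → ℕ := fun R => Nat.find (hex R) with hι
  have hι_spec : ∀ R, M < 2 ^ (ι R + 1) * avg ((R : ℛ) : Set X) :=
    fun R => Nat.find_spec (hex R)
  have hι_le : ∀ R, 2 ^ (ι R) * avg ((R : ℛ) : Set X) ≤ M := by
    intro R
    rcases Nat.eq_zero_or_pos (ι R) with h0 | hpos
    · rw [h0, pow_zero, one_mul]
      exact hbound _ (R : ℛ).2 (hmem R).1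
    · obtain ⟨j, hj⟩ := Nat.exists_eq_succ_of_ne_zero hpos.ne'
      have hlt : j < Nat.find (hex R) := by
        have hEq : ι R = Nat.find (hex R) := rfl
        omega
      have := Nat.find_min (hex R) hlt
      push_neg at this
      rw [hj]
      exact this
  -- injectivity
  have hinj : Function.Injective ι := by
    intro R₁ R₂ hEq
    by_contra hne
    have hneS : ((R₁ : ℛ) : Set X) ≠ ((R₂ : ℛ) : Set X) := by
      intro h
      exact hne (Subtype.ext (Subtype.ext h))
    have hx₁ := (hmem R₁).1
    have hx₂ := (hmem R₂).1
    have hcmp := hnested _ ((R₁ : ℛ)).2 _ ((R₂ : ℛ)).2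
    have hss : (((R₁ : ℛ) : Set X) ⊂ ((R₂ : ℛ) : Set X)) ∨
        (((R₂ : ℛ) : Set X) ⊂ ((R₁ : ℛ) : Set X)) := by
      rcases hcmp with h | h | h
      · exact Or.inl (ssubset_of_subset_of_ne h hneS)
      · exact Or.inr (ssubset_of_subset_of_ne h hneS.symm)
      · exact absurd h (by
          intro h
          have : x ∈ (((R₁ : ℛ) : Set X) ∩ ((R₂ : ℛ) : Set X)) := ⟨hx₁, hx₂⟩
          rw [h] at this
          exact this)
    -- WLOG-style: both cases symmetric
    have key : ∀ (A B : Function.support g), ι A = ι B →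
        ((A : ℛ) : Set X) ⊂ ((B : ℛ) : Set X) → False := by
      intro A B hAB hsub
      have hd := hdouble _ ((A : ℛ)).2 _ ((B : ℛ)).2 hsub
      have h1 : (2 : ℝ≥0∞) ^ (ι B + 1) * avg ((B : ℛ) : Set X)
          ≤ 2 ^ (ι B) * avg ((A : ℛ) : Set X) := by
        rw [pow_succ, mul_assoc]
        exact mul_le_mul_right hd.le _
      have := (hι_spec B).trans_le (h1.trans (hAB ▸ hι_le A))
      exact lt_irrefl _ this
    rcases hss with h | h
    · exact key R₁ R₂ hEq h
    · exact key R₂ R₁ hEq.symm h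
  -- the bound
  have hgle : ∀ R : Function.support g,
      g R ≤ ((2 : ℝ≥0∞)⁻¹ ^ (ι R) * M) ^ p := by
    intro R
    have havgle : avg ((R : ℛ) : Set X) ≤ (2 : ℝ≥0∞)⁻¹ ^ (ι R) * M := by
      have := mul_le_mul_right (hι_le R) ((2 : ℝ≥0∞)⁻¹ ^ (ι R))
      rwa [← mul_assoc, ← mul_pow, ENNReal.inv_mul_cancel two_ne_zero ENNReal.ofNat_ne_top,
        one_pow, one_mul] at this
    calc g ↑R ≤ avg ((R : ℛ) : Set X) ^ p * 1 := by
          apply mul_le_mul_right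
          by_cases hx : x ∈ ((R : ℛ) : Set X) <;> simp [Set.indicator, hx]
      _ = avg ((R : ℛ) : Set X) ^ p := mul_one _
      _ ≤ ((2 : ℝ≥0∞)⁻¹ ^ (ι R) * M) ^ p := ENNReal.rpow_le_rpow havgle hp0.le
  -- sum the geometric series
  have hsum : (∑' R : Function.support g, g R)
      ≤ ∑' k : ℕ, ((2 : ℝ≥0∞)⁻¹ ^ k * M) ^ p :=
    Summable.tsum_le_tsum_of_inj ι hinj (fun _ _ => zero_le) hgle
      ENNReal.summable ENNReal.summable
  refine hsum.trans ?_
  have hterm : ∀ k : ℕ, ((2 : ℝ≥0∞)⁻¹ ^ k * M) ^ p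
      = ((2 : ℝ≥0∞)⁻¹ ^ p) ^ k * M ^ p := by
    intro k
    rw [ENNReal.mul_rpow_of_nonneg _ _ hp0.le, ← ENNReal.rpow_natCast (2 : ℝ≥0∞)⁻¹ k,
      ← ENNReal.rpow_mul, mul_comm (k : ℝ) p, ENNReal.rpow_mul,
      ENNReal.rpow_natCast]
  simp_rw [hterm]
  rw [ENNReal.tsum_mul_right, ENNReal.tsum_geometric]
  have hr : (2 : ℝ≥0∞)⁻¹ ^ p ≤ 2⁻¹ := by
    calc (2 : ℝ≥0∞)⁻¹ ^ p ≤ (2 : ℝ≥0∞)⁻¹ ^ (1 : ℝ) :=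
          ENNReal.rpow_le_rpow_of_exponent_ge (ENNReal.inv_le_one.2 one_le_two) hp.le
      _ = 2⁻¹ := ENNReal.rpow_one _
  have h2 : (1 - (2 : ℝ≥0∞)⁻¹ ^ p)⁻¹ ≤ 2 := by
    have hle : (2 : ℝ≥0∞)⁻¹ ≤ 1 - 2⁻¹ ^ p := by
      calc (2 : ℝ≥0∞)⁻¹ = 1 - 2⁻¹ := ENNReal.one_sub_inv_two.symm
        _ ≤ 1 - (2 : ℝ≥0∞)⁻¹ ^ p := tsub_le_tsub_left hr 1
    calc (1 - (2 : ℝ≥0∞)⁻¹ ^ p)⁻¹ ≤ ((2 : ℝ≥0∞)⁻¹)⁻¹ := ENNReal.inv_le_inv.2 hle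
      _ = 2 := by rw [inv_inv]
  exact mul_le_mul_left h2 _
end

section
/- Let σ be a σ-finite measure and 𝒟 a dyadic system whose cubes have generations bounded below (so there exist maximal cubes). Define the principal cubes 𝒫 = ⋃_{j≥0} 𝒫_j where 𝒫₀ consists of all maximal cubes and 𝒫_{j+1} = ⋃_{P∈𝒫_j}{R ⊊ P : R maximal with ⟨f⟩^σ_R > 2⟨f⟩^σ_P}. For Q ∈ 𝒟 let Π(Q) denote the minimal P ∈ 𝒫 containing Q. Then: (i) for P₁, P₂ ∈ 𝒫 with P₁ ⊊ P₂ one has ⟨f⟩^σ_{P₁} > 2⟨f⟩^σ_{P₂}; (ii) for every Q ∈ 𝒟, ⟨f⟩^σ_Q ≤ 2⟨f⟩^σ_{Π(Q)}. -/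
open MeasureTheory Set
open scoped ENNReal

/-- Properties of principal cubes (Remark 6.8): averages strictly double
along strict inclusions of principal cubes, and every dyadic cube has average
at most twice that of its minimal principal cube. -/
theorem stmt13 {X : Type*} [MeasurableSpace X] (σ : Measure X)
    (𝒟 : Set (Set X))
    (hnested : ∀ Q ∈ 𝒟, ∀ R ∈ 𝒟, Q ⊆ R ∨ R ⊆ Q ∨ Q ∩ R = ∅)
    (hfin : ∀ Q ∈ 𝒟, {R | R ∈ 𝒟 ∧ Q ⊆ R}.Finite)
    (f : X → ℝ≥0∞)
    (A : Set X → ℝ≥0∞) (hA : ∀ R, A R = (∫⁻ y in R, f y ∂σ) / σ R)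
    (Pcol : ℕ → Set (Set X))
    (hPcol0 : Pcol 0 = {Q | Q ∈ 𝒟 ∧ ∀ R ∈ 𝒟, Q ⊆ R → Q = R})
    (hPcolsucc : ∀ j, Pcol (j + 1) = {R | R ∈ 𝒟 ∧ ∃ P ∈ Pcol j, R ⊂ P ∧
        2 * A P < A R ∧
        ∀ R' ∈ 𝒟, R ⊆ R' → R' ⊂ P → 2 * A P < A R' → R' = R})
    (PiQ : Set X → Set X)
    (hPi : ∀ Q ∈ 𝒟, PiQ Q ∈ (⋃ j, Pcol j) ∧ Q ⊆ PiQ Q ∧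
        ∀ P ∈ (⋃ j, Pcol j), Q ⊆ P → PiQ Q ⊆ P) :
    (∀ P₁ ∈ (⋃ j, Pcol j), ∀ P₂ ∈ (⋃ j, Pcol j), P₁ ⊂ P₂ → 2 * A P₂ < A P₁) ∧
    (∀ Q ∈ 𝒟, A Q ≤ 2 * A (PiQ Q)) := by
  have hAempty : A ∅ = 0 := by
    rw [hA]; simp
  have hmemD : ∀ j, ∀ P ∈ Pcol j, P ∈ 𝒟 := by
    intro j P hP
    cases j with
    | zero => rw [hPcol0] at hP; exact hP.1
    | succ j => rw [hPcolsucc] at hP; exact hP.1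
  have hchain : ∀ S ∈ 𝒟, ∀ T ∈ 𝒟, (S ∩ T).Nonempty → S ⊆ T ∨ T ⊆ S := by
    intro S hS T hT hne
    rcases hnested S hS T hT with h | h | h
    · exact Or.inl h
    · exact Or.inr h
    · rw [h] at hne; exact absurd hne (by simp)
  have hle2 : ∀ x : ℝ≥0∞, x ≤ 2 * x := fun x =>
    le_mul_of_one_le_left zero_le one_le_two
  have hne_of_pos : ∀ P : Set X, 0 < A P → P.Nonempty := by
    intro P hP
    rw [Set.nonempty_iff_ne_empty]
    rintro rfl
    rw [hAempty] at hP; exact lt_irrefl _ hP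
  -- Key lemma: strong induction on the sum of generations.
  have key : ∀ n j k, j + k ≤ n → ∀ P₁ ∈ Pcol j, ∀ P₂ ∈ Pcol k, P₁ ⊂ P₂ →
      2 * A P₂ < A P₁ := by
    intro n
    induction n using Nat.strong_induction_on with
    | _ n ih =>
      intro j k hjk P₁ hP₁ P₂ hP₂ hsub
      cases j with
      | zero =>
        rw [hPcol0] at hP₁
        exact absurd (hP₁.2 P₂ (hmemD k P₂ hP₂) hsub.subset) hsub.ne
      | succ j =>
        rw [hPcolsucc] at hP₁
        obtain ⟨hP₁D, P, hP, hP₁P, hav, hmax⟩ := hP₁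
        have hPD : P ∈ 𝒟 := hmemD j P hP
        have hP₂D : P₂ ∈ 𝒟 := hmemD k P₂ hP₂
        have hP₁ne : P₁.Nonempty :=
          hne_of_pos P₁ (lt_of_le_of_lt zero_le hav)
        obtain ⟨x, hx⟩ := hP₁ne
        rcases hchain P hPD P₂ hP₂D ⟨x, hP₁P.1 hx, hsub.1 hx⟩ with hPP₂ | hP₂P
        · rcases eq_or_ne P P₂ with rfl | hne
          · exact hav
          · have hlt : 2 * A P₂ < A P := ih (j + k) (by omega) j k le_rfl P hP P₂ hP₂ ⟨hPP₂, fun h => hne (subset_antisymm hPP₂ h)⟩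
            exact lt_of_lt_of_le hlt (le_trans (hle2 _) hav.le)
        · rcases eq_or_ne P₂ P with rfl | hne
          · exact hav
          · have hP₂Pss : P₂ ⊂ P := ⟨hP₂P, fun h => hne (subset_antisymm hP₂P h)⟩
            cases k with
            | zero =>
              rw [hPcol0] at hP₂
              exact absurd (hP₂.2 P hPD hP₂P) hne
            | succ m =>
              rw [hPcolsucc] at hP₂
              obtain ⟨hP₂D', P'', hP'', hP₂P'', hav₂, hmax₂⟩ := hP₂
              have hP''D : P'' ∈ 𝒟 := hmemD m P'' hP''
              have hcmp2 : P ⊆ P'' ∨ P'' ⊆ P :=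
                hchain P hPD P'' hP''D ⟨x, hP₁P.1 hx, hP₂P''.1 (hsub.1 hx)⟩
              rcases hcmp2 with hPP'' | hP''P
              · rcases eq_or_ne P P'' with rfl | hne2
                · -- P = P'' : then 2 A P < A P₂, maximality of P₁ forces P₂ = P₁
                  exact absurd (hmax P₂ hP₂D' hsub.subset hP₂Pss hav₂) hsub.ne'
                · have hPP''ss : P ⊂ P'' := ⟨hPP'', fun h => hne2 (subset_antisymm hPP'' h)⟩
                  have hlt : 2 * A P'' < A P :=
                    ih (j + m) (by omega) j m le_rfl P hP P'' hP'' hPP''ss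
                  exact absurd (hmax₂ P hPD hP₂P hPP''ss hlt) (fun h => hne h.symm)
              · rcases eq_or_ne P'' P with rfl | hne2
                · exact absurd (hmax P₂ hP₂D' hsub.subset hP₂Pss hav₂) hsub.ne'
                · have hP''Pss : P'' ⊂ P := ⟨hP''P, fun h => hne2 (subset_antisymm hP''P h)⟩
                  have hlt : 2 * A P < A P'' :=
                    ih (m + j) (by omega) m j le_rfl P'' hP'' P hP hP''Pss
                  have hlt2 : 2 * A P < A P₂ :=
                    lt_trans (hlt.trans_le (hle2 _)) hav₂
                  exact absurd (hmax P₂ hP₂D' hsub.subset hP₂Pss hlt2) hsub.ne'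
  constructor
  · intro P₁ h₁ P₂ h₂ hsub
    obtain ⟨j, hj⟩ := Set.mem_iUnion.1 h₁
    obtain ⟨k, hk⟩ := Set.mem_iUnion.1 h₂
    exact key (j + k) j k le_rfl P₁ hj P₂ hk hsub
  · intro Q hQ
    by_contra hcon
    push_neg at hcon
    obtain ⟨hPiP, hQPi, hmin⟩ := hPi Q hQ
    have hQne : Q.Nonempty := hne_of_pos Q (lt_of_le_of_lt zero_le hcon)
    have hQssPi : Q ⊂ PiQ Q := by
      refine ⟨hQPi, fun h => ?_⟩
      have : Q = PiQ Q := subset_antisymm hQPi h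
      rw [← this] at hcon
      exact absurd hcon (not_lt.2 (hle2 _))
    obtain ⟨j, hj⟩ := Set.mem_iUnion.1 hPiP
    set s : Set (Set X) := {R | R ∈ 𝒟 ∧ Q ⊆ R ∧ R ⊂ PiQ Q ∧ 2 * A (PiQ Q) < A R} with hs
    have hsfin : s.Finite := (hfin Q hQ).subset (fun R hR => ⟨hR.1, hR.2.1⟩)
    have hsne : s.Nonempty := ⟨Q, hQ, subset_rfl, hQssPi, hcon⟩
    obtain ⟨R, hRs, hRmax⟩ := hsfin.exists_maximalFor id s hsne
    have hRmem : R ∈ Pcol (j + 1) := by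
      rw [hPcolsucc]
      refine ⟨hRs.1, PiQ Q, hj, hRs.2.2.1, hRs.2.2.2, ?_⟩
      intro R' hR'D hRR' hR'Pi hR'av
      exact subset_antisymm (hRmax ⟨hR'D, hRs.2.1.trans hRR', hR'Pi, hR'av⟩ hRR') hRR'
    have : PiQ Q ⊆ R := hmin R (Set.mem_iUnion.2 ⟨j + 1, hRmem⟩) hRs.2.1
    exact absurd (subset_antisymm hRs.2.2.1.subset this) hRs.2.2.1.ne
end
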